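/- arXiv:2410.07533 — 5 statements merged into one kernel-verified Lean document; each statement's English description precedes it below -/
import Mathlib

section
/- Let n ≥ 1, let ℋ be a nonempty convex set of n×n real symmetric positive definite matrices, let η > 0, let T ≥ 1, and let γ̂₁,…,γ̂_T and D₁,…,D_T be n×n real symmetric matrices. Suppose that for each t = 1,…,T the matrix H_t ∈ ℋ maximizes the function H ↦ ⟨H, Σ_{s=1}^{t-1} γ̂_s + Σ_{s=1}^{t} D_s⟩ − G(H)/η over ℋ. Suppose s₁,…,s_T are real numbers such that for every t and every H ∈ ℋ, ⟨H − H_t, γ̂_t⟩ − D_G(H, H_t)/η ≤ s_t. Then for every U ∈ ℋ and every real number m with m ≤ G(H) for all H ∈ ℋ, one has Σ_{t=1}^{T} ⟨U − H_t, γ̂_t⟩ ≤ (G(U) − m)/η − Σ_{t=1}^{T} ⟨U − H_t, D_t⟩ + Σ_{t=1}^{T} s_t. -/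
open Matrix Finset

/-- Inner product of matrices: ⟨A, B⟩ = tr(Aᵀ B). -/
noncomputable def matInner {n : ℕ} (A B : Matrix (Fin n) (Fin n) ℝ) : ℝ := (Aᵀ * B).trace

/-- The log-determinant barrier regularizer G(H) = -log det H. -/
noncomputable def barrierG {n : ℕ} (H : Matrix (Fin n) (Fin n) ℝ) : ℝ := - Real.log H.det

/-- The Bregman divergence of G:
D_G(X, Y) = -log det X + log det Y + tr(Y⁻¹ (X - Y)). -/
noncomputable def bregmanG {n : ℕ} (X Y : Matrix (Fin n) (Fin n) ℝ) : ℝ :=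
  - Real.log X.det + Real.log Y.det + (Y⁻¹ * (X - Y)).trace

lemma trace_eq_sum_eig {n : ℕ} {A : Matrix (Fin n) (Fin n) ℝ} (hA : A.IsHermitian) :
    A.trace = ∑ i, hA.eigenvalues i := by
  nth_rewrite 1 [hA.spectral_theorem]
  rw [Unitary.conjStarAlgAut_apply, Matrix.trace_mul_cycle,
    Matrix.UnitaryGroup.star_mul_self hA.eigenvectorUnitary, Matrix.one_mul]
  simp [Matrix.trace_diagonal]

lemma logdet_tangent {n : ℕ} {X Y : Matrix (Fin n) (Fin n) ℝ}
    (hX : X.PosDef) (hY : Y.PosDef) :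
    Real.log X.det ≤ Real.log Y.det + (Y⁻¹ * (X - Y)).trace := by
  classical
  open scoped MatrixOrder in
  set S := CFC.sqrt Y with hSdef
  open scoped MatrixOrder in
  have hS : S.PosSemidef := (CFC.sqrt_nonneg Y).posSemidef
  open scoped MatrixOrder in
  have hSS : S * S = Y := CFC.sqrt_mul_sqrt_self Y hY.posSemidef.nonneg
  have hdetY : 0 < Y.det := hY.det_pos
  have hdetX : 0 < X.det := hX.det_pos
  have hdetS : S.det ≠ 0 := by
    intro h
    rw [← hSS, Matrix.det_mul, h, mul_zero] at hdetY
    exact lt_irrefl _ hdetY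
  have hSinvH : (S⁻¹)ᴴ = S⁻¹ := by
    rw [Matrix.conjTranspose_nonsing_inv, hS.1.eq]
  set M := S⁻¹ * X * S⁻¹ with hMdef
  have hM : M.PosSemidef := by
    have := hX.posSemidef.conjTranspose_mul_mul_same (S⁻¹)
    rwa [hSinvH] at this
  have h1 : S⁻¹.det * S.det = 1 := by
    rw [← Matrix.det_mul, Matrix.nonsing_inv_mul S (Ne.isUnit hdetS), Matrix.det_one]
  have hMdet : M.det * Y.det = X.det := by
    have hM' : M.det = S⁻¹.det * X.det * S⁻¹.det := by
      rw [hMdef, Matrix.det_mul, Matrix.det_mul]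
    calc M.det * Y.det = (S⁻¹.det * X.det * S⁻¹.det) * (S.det * S.det) := by
          rw [hM', ← hSS, Matrix.det_mul]
      _ = X.det * ((S⁻¹.det * S.det) * (S⁻¹.det * S.det)) := by ring
      _ = X.det := by rw [h1]; ring
  have hMdetpos : 0 < M.det := by nlinarith
  have hprod : M.det = ∏ i, hM.1.eigenvalues i := by
    simpa using hM.1.det_eq_prod_eigenvalues
  have hevpos : ∀ i, 0 < hM.1.eigenvalues i := by
    intro i
    rcases (hM.eigenvalues_nonneg i).lt_or_eq with h | h
    · exact h
    · exfalso
      rw [hprod, Finset.prod_eq_zero (Finset.mem_univ i) h.symm] at hMdetpos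
      exact lt_irrefl _ hMdetpos
  have htrM : M.trace = ∑ i, hM.1.eigenvalues i := trace_eq_sum_eig hM.1
  have hlog : Real.log M.det = ∑ i, Real.log (hM.1.eigenvalues i) := by
    rw [hprod]
    exact Real.log_prod (fun i _ => (hevpos i).ne')
  have hkey : Real.log M.det ≤ M.trace - n := by
    rw [hlog, htrM]
    have : ∑ i, Real.log (hM.1.eigenvalues i) ≤ ∑ i, (hM.1.eigenvalues i - 1) :=
      Finset.sum_le_sum fun i _ => Real.log_le_sub_one_of_pos (hevpos i)
    simpa [Finset.sum_sub_distrib, Finset.card_univ] using this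
  have hlogXY : Real.log X.det = Real.log M.det + Real.log Y.det := by
    rw [← hMdet, Real.log_mul hMdetpos.ne' hdetY.ne']
  have htr : (Y⁻¹ * X).trace = M.trace := by
    have hYinv : Y⁻¹ = S⁻¹ * S⁻¹ := by rw [← hSS, Matrix.mul_inv_rev]
    rw [hYinv, Matrix.mul_assoc, Matrix.trace_mul_comm, hMdef, Matrix.mul_assoc]
  have htrsub : (Y⁻¹ * (X - Y)).trace = M.trace - n := by
    rw [Matrix.mul_sub, Matrix.trace_sub, htr, Matrix.nonsing_inv_mul Y (Ne.isUnit hdetY.ne')]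
    simp [Matrix.trace_one]
  linarith

lemma matInner_add_left {n : ℕ} (A B C : Matrix (Fin n) (Fin n) ℝ) :
    matInner (A + B) C = matInner A C + matInner B C := by
  simp [matInner, Matrix.transpose_add, Matrix.add_mul, Matrix.trace_add]

lemma matInner_sub_left {n : ℕ} (A B C : Matrix (Fin n) (Fin n) ℝ) :
    matInner (A - B) C = matInner A C - matInner B C := by
  simp [matInner, Matrix.transpose_sub, Matrix.sub_mul, Matrix.trace_sub]

lemma matInner_smul_left {n : ℕ} (r : ℝ) (A C : Matrix (Fin n) (Fin n) ℝ) :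
    matInner (r • A) C = r * matInner A C := by
  simp [matInner, Matrix.transpose_smul, Matrix.smul_mul, Matrix.trace_smul]

lemma matInner_add_right {n : ℕ} (A B C : Matrix (Fin n) (Fin n) ℝ) :
    matInner A (B + C) = matInner A B + matInner A C := by
  simp [matInner, Matrix.mul_add, Matrix.trace_add]

lemma matInner_sum_right {n : ℕ} {ι : Type*} (A : Matrix (Fin n) (Fin n) ℝ)
    (s : Finset ι) (f : ι → Matrix (Fin n) (Fin n) ℝ) :
    matInner A (∑ i ∈ s, f i) = ∑ i ∈ s, matInner A (f i) := by
  simp [matInner, Matrix.mul_sum, Matrix.trace_sum]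

lemma inv_trace_eq {n : ℕ} (X Δ : Matrix (Fin n) (Fin n) ℝ) :
    (X⁻¹ * Δ).trace = X.det⁻¹ * (X.adjugate * Δ).trace := by
  rw [Matrix.inv_def, Ring.inverse_eq_inv', Matrix.smul_mul, Matrix.trace_smul, smul_eq_mul]

lemma strong_opt {n : ℕ} (ℋ : Set (Matrix (Fin n) (Fin n) ℝ)) (hconv : Convex ℝ ℋ)
    (hPD : ∀ K ∈ ℋ, K.PosDef)
    (η : ℝ) (hη : 0 < η) (P : Matrix (Fin n) (Fin n) ℝ)
    (Hm : Matrix (Fin n) (Fin n) ℝ) (hHm : Hm ∈ ℋ)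
    (hopt : ∀ K ∈ ℋ, matInner K P - barrierG K / η ≤ matInner Hm P - barrierG Hm / η)
    (K : Matrix (Fin n) (Fin n) ℝ) (hK : K ∈ ℋ) :
    matInner (K - Hm) P + (Hm⁻¹ * (K - Hm)).trace / η ≤ 0 := by
  classical
  set Δ := K - Hm with hΔ
  set g : ℝ → ℝ := fun ε =>
    matInner Δ P + ((Hm + ε • Δ).det⁻¹ * ((Hm + ε • Δ).adjugate * Δ).trace) / η with hg
  have hmemε : ∀ ε : ℝ, ε ∈ Set.Ioc (0:ℝ) 1 → Hm + ε • Δ ∈ ℋ := by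
    intro ε hε
    have h := hconv hHm hK (by linarith [hε.2] : (0:ℝ) ≤ 1 - ε) (le_of_lt hε.1)
      (by ring)
    convert h using 1
    rw [hΔ, smul_sub, sub_smul, one_smul]
    abel
  have hgle : ∀ ε ∈ Set.Ioc (0:ℝ) 1, g ε ≤ 0 := by
    intro ε hε
    set X := Hm + ε • Δ with hX
    have hXmem := hmemε ε hε
    have hXPD := hPD _ hXmem
    have hHmPD := hPD _ hHm
    have h1 := hopt _ hXmem
    have hlin : matInner X P = matInner Hm P + ε * matInner Δ P := by
      rw [hX, matInner_add_left, matInner_smul_left]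
    have h2 := logdet_tangent hHmPD hXPD
    have hsub : Hm - X = (-ε) • Δ := by rw [hX, neg_smul]; abel
    set t : ℝ := (X⁻¹ * Δ).trace with ht
    have htr2 : (X⁻¹ * (Hm - X)).trace = -ε * t := by
      rw [hsub, Matrix.mul_smul, Matrix.trace_smul, smul_eq_mul]
    rw [htr2] at h2
    simp only [barrierG, hlin] at h1
    -- h1 : ... ; h2 : log Hm.det ≤ log X.det + -ε * t
    have hεA : ε * matInner Δ P ≤ ε * (-(t / η)) := by
      have hd : (Real.log Hm.det - Real.log X.det) / η ≤ (-ε * t) / η :=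
        div_le_div_of_nonneg_right (by linarith) hη.le
      rw [sub_div] at hd
      have h1' : ε * matInner Δ P ≤ Real.log Hm.det / η - Real.log X.det / η := by
        simp only [← hX, neg_div] at h1
        linarith
      calc ε * matInner Δ P ≤ (-ε * t) / η := by linarith
        _ = ε * (-(t / η)) := by ring
    have hA : matInner Δ P ≤ -(t / η) := (mul_le_mul_iff_right₀ hε.1).mp hεA
    have hgε : g ε = matInner Δ P + t / η := by
      rw [hg]
      simp only [← hX]
      rw [ht, inv_trace_eq]
    rw [hgε]
    linarith
  have hdet0 : (fun ε : ℝ => (Hm + ε • Δ).det) 0 ≠ 0 := by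
    simp only [zero_smul, add_zero]
    exact (hPD _ hHm).det_pos.ne'
  have hc1 : Continuous fun ε : ℝ => Hm + ε • Δ :=
    continuous_const.add (continuous_id.smul continuous_const)
  have hcont : ContinuousAt g 0 := by
    refine continuousAt_const.add (ContinuousAt.div_const (ContinuousAt.mul ?_ ?_) η)
    · exact (hc1.matrix_det.continuousAt).inv₀ hdet0
    · exact (((hc1.matrix_adjugate).matrix_mul continuous_const).matrix_trace).continuousAt
  haveI hne : (nhdsWithin (0:ℝ) (Set.Ioc 0 1)).NeBot := by
    refine mem_closure_iff_nhdsWithin_neBot.mp ?_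
    rw [closure_Ioc (by norm_num : (0:ℝ) ≠ 1)]
    exact Set.left_mem_Icc.mpr zero_le_one
  have hg0 : g 0 ≤ 0 := by
    refine le_of_tendsto (hcont.continuousWithinAt (s := Set.Ioc 0 1)) ?_
    exact eventually_nhdsWithin_of_forall hgle
  have : g 0 = matInner Δ P + (Hm⁻¹ * Δ).trace / η := by
    rw [hg]
    simp only [zero_smul, add_zero]
    rw [inv_trace_eq]
  rw [this] at hg0
  exact hg0
theorem stmt_0 {n : ℕ} (hn : 1 ≤ n)
    (ℋ : Set (Matrix (Fin n) (Fin n) ℝ)) (hne : ℋ.Nonempty) (hconv : Convex ℝ ℋ)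
    (hPD : ∀ K ∈ ℋ, K.PosDef) (hSymH : ∀ K ∈ ℋ, K.IsSymm)
    (η : ℝ) (hη : 0 < η) (T : ℕ) (hT : 1 ≤ T)
    (γ D H : ℕ → Matrix (Fin n) (Fin n) ℝ)
    (hγsym : ∀ t ∈ Finset.Icc 1 T, (γ t).IsSymm)
    (hDsym : ∀ t ∈ Finset.Icc 1 T, (D t).IsSymm)
    (hHmem : ∀ t ∈ Finset.Icc 1 T, H t ∈ ℋ)
    (hmax : ∀ t ∈ Finset.Icc 1 T, ∀ K ∈ ℋ,
      matInner K (∑ s ∈ Finset.Icc 1 (t - 1), γ s + ∑ s ∈ Finset.Icc 1 t, D s)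
        - barrierG K / η
      ≤ matInner (H t) (∑ s ∈ Finset.Icc 1 (t - 1), γ s + ∑ s ∈ Finset.Icc 1 t, D s)
        - barrierG (H t) / η)
    (s : ℕ → ℝ)
    (hs : ∀ t ∈ Finset.Icc 1 T, ∀ K ∈ ℋ,
      matInner (K - H t) (γ t) - bregmanG K (H t) / η ≤ s t)
    (U : Matrix (Fin n) (Fin n) ℝ) (hU : U ∈ ℋ)
    (m : ℝ) (hm : ∀ K ∈ ℋ, m ≤ barrierG K) :
    ∑ t ∈ Finset.Icc 1 T, matInner (U - H t) (γ t)
      ≤ (barrierG U - m) / η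
        - ∑ t ∈ Finset.Icc 1 T, matInner (U - H t) (D t)
        + ∑ t ∈ Finset.Icc 1 T, s t := by
  classical
  obtain ⟨T', rfl⟩ : ∃ T', T = T' + 1 := ⟨T - 1, (Nat.succ_pred_eq_of_pos hT).symm⟩
  set P : ℕ → Matrix (Fin n) (Fin n) ℝ :=
    fun t => ∑ r ∈ Finset.Icc 1 (t - 1), γ r + ∑ r ∈ Finset.Icc 1 t, D r with hP
  have hstar : ∀ t ∈ Finset.Icc 1 (T' + 1), ∀ K ∈ ℋ,
      matInner K (P t) - barrierG K / η + bregmanG K (H t) / η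
        ≤ matInner (H t) (P t) - barrierG (H t) / η := by
    intro t ht K hK
    have hso := strong_opt ℋ hconv hPD η hη (P t) (H t) (hHmem t ht)
      (fun K' hK' => hmax t ht K' hK') K hK
    rw [matInner_sub_left] at hso
    simp only [bregmanG, barrierG, neg_div, add_div]
    linarith
  have claim : ∀ u : ℕ, u + 1 ≤ T' + 1 →
      matInner (H (u+1)) (P (u+1)) - barrierG (H (u+1)) / η
        ≤ -(m / η) + ∑ r ∈ Finset.Icc 1 (u+1), matInner (H r) (D r)
          + ∑ r ∈ Finset.Icc 1 u,
              (matInner (H (r+1)) (γ r) - bregmanG (H (r+1)) (H r) / η) := by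
    intro u
    induction u with
    | zero =>
      intro _
      have hmem1 : (1:ℕ) ∈ Finset.Icc 1 (T'+1) := by simp
      have hm1 := hm (H 1) (hHmem 1 hmem1)
      have hP1 : P 1 = D 1 := by
        simp only [hP]
        rw [show (1:ℕ) - 1 = 0 from rfl, Finset.Icc_eq_empty (by norm_num),
          Finset.Icc_self, Finset.sum_singleton, Finset.sum_empty, zero_add]
      rw [hP1, Finset.Icc_self, Finset.sum_singleton,
        Finset.Icc_eq_empty (by norm_num), Finset.sum_empty]
      have hdiv : m / η ≤ barrierG (H 1) / η := div_le_div_of_nonneg_right hm1 hη.le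
      linarith
    | succ u ih =>
      intro h2
      have IH := ih (by omega)
      have hmemu2 : (u+1+1) ∈ Finset.Icc 1 (T'+1) := by
        simp only [Finset.mem_Icc]; omega
      have hmemu1 : (u+1) ∈ Finset.Icc 1 (T'+1) := by
        simp only [Finset.mem_Icc]; omega
      have hstep := hstar (u+1) hmemu1 (H (u+1+1)) (hHmem _ hmemu2)
      have hPsucc : P (u+1+1) = P (u+1) + (γ (u+1) + D (u+1+1)) := by
        simp only [hP]
        rw [show u+1+1-1 = u+1 from rfl, show u+1-1 = u from rfl]
        rw [Finset.sum_Icc_succ_top (by omega : (1:ℕ) ≤ u+1) γ,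
          Finset.sum_Icc_succ_top (by omega : (1:ℕ) ≤ u+1+1) D]
        abel
      have hexp : matInner (H (u+1+1)) (P (u+1+1))
          = matInner (H (u+1+1)) (P (u+1)) + matInner (H (u+1+1)) (γ (u+1))
            + matInner (H (u+1+1)) (D (u+1+1)) := by
        rw [hPsucc,
          matInner_add_right (H (u+1+1)) (P (u+1)) (γ (u+1) + D (u+1+1)),
          matInner_add_right (H (u+1+1)) (γ (u+1)) (D (u+1+1))]
        ring
      rw [Finset.sum_Icc_succ_top (by omega : (1:ℕ) ≤ u+1+1)
          (fun r => matInner (H r) (D r)),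
        Finset.sum_Icc_succ_top (by omega : (1:ℕ) ≤ u+1)
          (fun r => matInner (H (r+1)) (γ r) - bregmanG (H (r+1)) (H r) / η),
        hexp]
      linarith
  have hTmem : T'+1 ∈ Finset.Icc 1 (T'+1) := by simp
  have hfin := hstar (T'+1) hTmem U hU
  have hclaim := claim T' le_rfl
  have hUP : matInner U (P (T'+1))
      = ∑ r ∈ Finset.Icc 1 T', matInner U (γ r)
        + ∑ r ∈ Finset.Icc 1 (T'+1), matInner U (D r) := by
    simp only [hP, show T'+1-1 = T' from rfl]
    rw [matInner_add_right, matInner_sum_right, matInner_sum_right]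
  have hsU := hs (T'+1) hTmem U hU
  rw [matInner_sub_left] at hsU
  have hsr : ∀ r ∈ Finset.Icc 1 T',
      matInner (H (r+1)) (γ r) - bregmanG (H (r+1)) (H r) / η
        ≤ s r + matInner (H r) (γ r) := by
    intro r hr
    simp only [Finset.mem_Icc] at hr
    have hrmem : r ∈ Finset.Icc 1 (T'+1) := by simp only [Finset.mem_Icc]; omega
    have hr1mem : (r+1) ∈ Finset.Icc 1 (T'+1) := by simp only [Finset.mem_Icc]; omega
    have := hs r hrmem (H (r+1)) (hHmem _ hr1mem)
    rw [matInner_sub_left] at this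
    linarith
  have hsum1 := Finset.sum_le_sum hsr
  rw [Finset.sum_add_distrib] at hsum1
  rw [sub_div]
  simp only [matInner_sub_left, Finset.sum_sub_distrib] at *
  simp only [Finset.sum_Icc_succ_top (Nat.le_add_left 1 T')] at hUP hclaim hfin ⊢
  linarith
end

section
/- Let B and Σ be n×n real symmetric positive definite matrices, let B^{1/2} denote the positive definite square root of B, and suppose B^{-1/2} Σ⁻¹ B^{-1/2} = Σ_{i=1}^{n} λᵢ vᵢvᵢᵀ, where λ₁,…,λₙ > 0 and v₁,…,vₙ is an orthonormal basis of ℝⁿ. Define B' = B^{1/2} (Σ_{i=1}^{n} max{λᵢ, 1} vᵢvᵢᵀ) B^{1/2}. Then B' ⪰ B and B' ⪰ Σ⁻¹. -/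
open Matrix

theorem stmt_3 {n : ℕ}
    (B S sqB : Matrix (Fin n) (Fin n) ℝ)
    (hB : B.PosDef) (hS : S.PosDef)
    (hsqB : sqB.PosDef) (hsq : sqB * sqB = B)
    (lam : Fin n → ℝ) (hlam : ∀ i, 0 < lam i)
    (v : Fin n → (Fin n → ℝ))
    (horth : ∀ i j, v i ⬝ᵥ v j = if i = j then (1 : ℝ) else 0)
    (hdecomp : sqB⁻¹ * S⁻¹ * sqB⁻¹ = ∑ i, lam i • vecMulVec (v i) (v i))
    (B' : Matrix (Fin n) (Fin n) ℝ)
    (hB' : B' = sqB * (∑ i, max (lam i) 1 • vecMulVec (v i) (v i)) * sqB) :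
    (B' - B).PosSemidef ∧ (B' - S⁻¹).PosSemidef := by
  have hsqBH : sqBᴴ = sqB := hsqB.isHermitian
  have hinv : Invertible sqB := hsqB.isUnit.invertible
  -- sum of outer products of orthonormal basis is identity
  set V : Matrix (Fin n) (Fin n) ℝ := Matrix.of v with hV
  have hVVt : V * Vᵀ = 1 := by
    ext i j
    simp [Matrix.mul_apply, Matrix.one_apply, hV, ← horth i j, dotProduct]
  have hVtV : Vᵀ * V = 1 := mul_eq_one_comm.mp hVVt
  have hsum1 : (∑ i, vecMulVec (v i) (v i)) = 1 := by
    rw [← hVtV]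
    ext j k
    simp [Matrix.mul_apply, Matrix.sum_apply, vecMulVec_apply, hV, mul_comm]
  -- each weighted sum with nonneg coeffs is PosSemidef
  have key : ∀ c : Fin n → ℝ, (∀ i, 0 ≤ c i) →
      (∑ i, c i • vecMulVec (v i) (v i)).PosSemidef := by
    intro c hc
    apply Finset.sum_induction _ _ (fun a b => PosSemidef.add) PosSemidef.zero
    intro i _
    rw [posSemidef_iff_dotProduct_mulVec]
    constructor
    · unfold Matrix.IsHermitian
      ext j k
      simp [vecMulVec_apply, mul_comm]
    · intro x
      have : x ⬝ᵥ (c i • vecMulVec (v i) (v i)) *ᵥ x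
          = c i * (v i ⬝ᵥ x) * (v i ⬝ᵥ x) := by
        simp [dotProduct, Matrix.mulVec, vecMulVec_apply, Finset.mul_sum,
          Finset.sum_mul, dotProduct]
        ring_nf
        rw [Finset.sum_comm]
        apply Finset.sum_congr rfl; intro a _
        apply Finset.sum_congr rfl; intro b _
        ring
      have hx : star x = x := by simp
      rw [hx, this, mul_assoc]
      exact mul_nonneg (hc i) (mul_self_nonneg _)
  -- conjugation lemma
  have conj : ∀ M : Matrix (Fin n) (Fin n) ℝ, M.PosSemidef →
      (sqB * M * sqB).PosSemidef := by
    intro M hM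
    have := hM.mul_mul_conjTranspose_same sqB
    rwa [hsqBH] at this
  constructor
  · have h1 : B' - B = sqB * ((∑ i, max (lam i) 1 • vecMulVec (v i) (v i))
        - ∑ i, vecMulVec (v i) (v i)) * sqB := by
      rw [hB', hsum1]
      simp [Matrix.mul_sub, Matrix.sub_mul, ← hsq]
    rw [h1]
    apply conj
    have : (∑ i, max (lam i) 1 • vecMulVec (v i) (v i))
        - ∑ i, vecMulVec (v i) (v i)
        = ∑ i, (max (lam i) 1 - 1) • vecMulVec (v i) (v i) := by
      rw [← Finset.sum_sub_distrib]
      congr 1; ext i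
      rw [sub_smul, one_smul]
    rw [this]
    exact key _ fun i => by simp [le_max_right]
  · have hSinv : S⁻¹ = sqB * (sqB⁻¹ * S⁻¹ * sqB⁻¹) * sqB := by
      have hdet : IsUnit sqB.det := hsqB.det_pos.ne'.isUnit
      rw [Matrix.mul_assoc, Matrix.mul_assoc, Matrix.nonsing_inv_mul _ hdet, mul_one,
        ← Matrix.mul_assoc, Matrix.mul_nonsing_inv _ hdet, Matrix.one_mul]
    have h2 : B' - S⁻¹ = sqB * ((∑ i, max (lam i) 1 • vecMulVec (v i) (v i))
        - ∑ i, lam i • vecMulVec (v i) (v i)) * sqB := by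
      rw [hB']
      nth_rewrite 1 [hSinv]
      rw [hdecomp]
      simp [Matrix.mul_sub, Matrix.sub_mul]
    rw [h2]
    apply conj
    rw [← Finset.sum_sub_distrib]
    have : ∀ i ∈ Finset.univ, max (lam i) 1 • vecMulVec (v i) (v i)
        - lam i • vecMulVec (v i) (v i)
        = (max (lam i) 1 - lam i) • vecMulVec (v i) (v i) := by
      intro i _; rw [sub_smul]
    rw [Finset.sum_congr rfl this]
    exact key _ fun i => by simp [le_max_left]
end

section
/- Let B and Σ be n×n real symmetric positive definite matrices, let B^{1/2} denote the positive definite square root of B, and suppose B^{-1/2} Σ⁻¹ B^{-1/2} = Σ_{i=1}^{n} λᵢ vᵢvᵢᵀ, where λ₁,…,λₙ > 0 and v₁,…,vₙ is an orthonormal basis of ℝⁿ. Define B' = B^{1/2} (Σ_{i=1}^{n} max{λᵢ, 1} vᵢvᵢᵀ) B^{1/2}. Then tr(Σ(B' − B)) = Σ_{i=1}^{n} max{1 − 1/λᵢ, 0}. -/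
open Matrix

private lemma vv_mul {n : ℕ} (a b c d : Fin n → ℝ) :
    vecMulVec a b * vecMulVec c d = (b ⬝ᵥ c) • vecMulVec a d := by
  ext i j
  simp only [mul_apply, vecMulVec_apply, Matrix.smul_apply, smul_eq_mul, dotProduct,
    Finset.sum_mul]
  exact Finset.sum_congr rfl fun k _ => by ring

private lemma vv_trace {n : ℕ} (a : Fin n → ℝ) :
    (vecMulVec a a).trace = a ⬝ᵥ a := by
  simp [trace, diag, vecMulVec_apply, dotProduct]

private lemma sum_vv_eq_one {n : ℕ} (v : Fin n → (Fin n → ℝ))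
    (horth : ∀ i j, v i ⬝ᵥ v j = if i = j then (1 : ℝ) else 0) :
    (∑ i, vecMulVec (v i) (v i)) = 1 := by
  set V : Matrix (Fin n) (Fin n) ℝ := Matrix.of v with hV
  have h1 : V * Vᵀ = 1 := by
    ext i j
    simpa [mul_apply, transpose_apply, hV, dotProduct, one_apply] using horth i j
  have h2 : Vᵀ * V = 1 := mul_eq_one_comm.mp h1
  ext k l
  have := congrFun (congrFun h2 k) l
  rw [Matrix.sum_apply]
  simpa [mul_apply, transpose_apply, hV, vecMulVec_apply, mul_comm] using this

theorem stmt_5 {n : ℕ}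
    (B S sqB : Matrix (Fin n) (Fin n) ℝ)
    (hB : B.PosDef) (hS : S.PosDef)
    (hsqB : sqB.PosDef) (hsq : sqB * sqB = B)
    (lam : Fin n → ℝ) (hlam : ∀ i, 0 < lam i)
    (v : Fin n → (Fin n → ℝ))
    (horth : ∀ i j, v i ⬝ᵥ v j = if i = j then (1 : ℝ) else 0)
    (hdecomp : sqB⁻¹ * S⁻¹ * sqB⁻¹ = ∑ i, lam i • vecMulVec (v i) (v i))
    (B' : Matrix (Fin n) (Fin n) ℝ)
    (hB' : B' = sqB * (∑ i, max (lam i) 1 • vecMulVec (v i) (v i)) * sqB) :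
    (S * (B' - B)).trace = ∑ i, max (1 - 1 / lam i) 0 := by
  have hSinv : IsUnit S.det := isUnit_iff_ne_zero.2 hS.det_pos.ne'
  have hsqinv : IsUnit sqB.det := isUnit_iff_ne_zero.2 hsqB.det_pos.ne'
  set Q : Matrix (Fin n) (Fin n) ℝ := ∑ i, (lam i)⁻¹ • vecMulVec (v i) (v i) with hQ
  -- P * Q = 1 where P = ∑ λ_i v_i v_iᵀ
  have hPQ : (∑ i, lam i • vecMulVec (v i) (v i)) * Q = 1 := by
    rw [hQ, Finset.sum_mul]
    have : ∀ i ∈ Finset.univ, (lam i • vecMulVec (v i) (v i)) * Q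
        = vecMulVec (v i) (v i) := by
      intro i _
      rw [hQ, Finset.mul_sum]
      rw [Finset.sum_eq_single i]
      · rw [smul_mul_assoc, mul_smul_comm, vv_mul, horth, if_pos rfl, one_smul,
          smul_smul, mul_inv_cancel₀ (hlam i).ne', one_smul]
      · intro j _ hj
        rw [smul_mul_assoc, mul_smul_comm, vv_mul, horth, if_neg (Ne.symm hj)]
        simp
      · simp
    rw [Finset.sum_congr rfl this, sum_vv_eq_one v horth]
  -- sqB * S * sqB = Q
  have hkey : sqB * S * sqB = Q := by
    have h1 : (sqB * S * sqB) * (sqB⁻¹ * S⁻¹ * sqB⁻¹) = 1 := by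
      rw [show sqB * S * sqB * (sqB⁻¹ * S⁻¹ * sqB⁻¹)
          = sqB * (S * (sqB * sqB⁻¹) * S⁻¹) * sqB⁻¹ by noncomm_ring]
      rw [mul_nonsing_inv _ hsqinv, mul_one, mul_nonsing_inv _ hSinv, mul_one,
        mul_nonsing_inv _ hsqinv]
    calc sqB * S * sqB = sqB * S * sqB * ((sqB⁻¹ * S⁻¹ * sqB⁻¹) * Q) := by
          rw [hdecomp, hPQ, mul_one]
      _ = (sqB * S * sqB * (sqB⁻¹ * S⁻¹ * sqB⁻¹)) * Q := by noncomm_ring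
      _ = Q := by rw [h1, one_mul]
  -- rewrite the trace
  have hsum1 := sum_vv_eq_one v horth
  have hdiff : B' - B = sqB * (∑ i, (max (lam i) 1 - 1) • vecMulVec (v i) (v i)) * sqB := by
    rw [hB', ← hsq]
    have : (∑ i, (max (lam i) 1 - 1) • vecMulVec (v i) (v i))
        = (∑ i, max (lam i) 1 • vecMulVec (v i) (v i)) - 1 := by
      rw [← hsum1, ← Finset.sum_sub_distrib]
      exact Finset.sum_congr rfl fun i _ => by rw [sub_smul, one_smul]
    rw [this]
    noncomm_ring
  rw [hdiff, show S * (sqB * (∑ i, (max (lam i) 1 - 1) • vecMulVec (v i) (v i)) * sqB)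
      = (S * sqB) * ((∑ i, (max (lam i) 1 - 1) • vecMulVec (v i) (v i)) * sqB) by simp only [mul_assoc],
    trace_mul_comm, show (∑ i, (max (lam i) 1 - 1) • vecMulVec (v i) (v i)) * sqB * (S * sqB)
      = (∑ i, (max (lam i) 1 - 1) • vecMulVec (v i) (v i)) * (sqB * S * sqB) by simp only [mul_assoc],
    hkey, trace_mul_comm, hQ, Finset.mul_sum]
  have hterm : ∀ i ∈ Finset.univ, ((∑ j, (lam j)⁻¹ • vecMulVec (v j) (v j)) *
      ((max (lam i) 1 - 1) • vecMulVec (v i) (v i)))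
      = ((lam i)⁻¹ * (max (lam i) 1 - 1)) • vecMulVec (v i) (v i) := by
    intro i _
    rw [Finset.sum_mul, Finset.sum_eq_single i]
    · rw [smul_mul_assoc, mul_smul_comm, vv_mul, horth, if_pos rfl, one_smul, smul_smul]
    · intro j _ hj
      rw [smul_mul_assoc, mul_smul_comm, vv_mul, horth, if_neg hj]
      simp
    · simp
  rw [Finset.sum_congr rfl hterm, trace_sum]
  refine Finset.sum_congr rfl fun i _ => ?_
  rw [trace_smul, vv_trace, horth, if_pos rfl, smul_eq_mul, mul_one]
  rcases le_or_gt 1 (lam i) with h | h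
  · rw [max_eq_left h, max_eq_left]
    · field_simp
    · rw [sub_nonneg, div_le_one (hlam i)]; exact h
  · rw [max_eq_right h.le, max_eq_right, sub_self, mul_zero]
    rw [sub_nonpos, le_div_iff₀ (hlam i), one_mul]; exact h.le
end

section
/- Let B and Σ be n×n real symmetric positive definite matrices, let B^{1/2} denote the positive definite square root of B, and suppose B^{-1/2} Σ⁻¹ B^{-1/2} = Σ_{i=1}^{n} λᵢ vᵢvᵢᵀ, where λ₁,…,λₙ > 0 and v₁,…,vₙ is an orthonormal basis of ℝⁿ. Define B' = B^{1/2} (Σ_{i=1}^{n} max{λᵢ, 1} vᵢvᵢᵀ) B^{1/2}. Then tr(Σ(B' − B)) ≤ log det(B') − log det(B). -/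
open Matrix

theorem stmt_7 {n : ℕ}
    (B S sqB : Matrix (Fin n) (Fin n) ℝ)
    (hB : B.PosDef) (hS : S.PosDef)
    (hsqB : sqB.PosDef) (hsq : sqB * sqB = B)
    (lam : Fin n → ℝ) (hlam : ∀ i, 0 < lam i)
    (v : Fin n → (Fin n → ℝ))
    (horth : ∀ i j, v i ⬝ᵥ v j = if i = j then (1 : ℝ) else 0)
    (hdecomp : sqB⁻¹ * S⁻¹ * sqB⁻¹ = ∑ i, lam i • vecMulVec (v i) (v i))
    (B' : Matrix (Fin n) (Fin n) ℝ)
    (hB' : B' = sqB * (∑ i, max (lam i) 1 • vecMulVec (v i) (v i)) * sqB) :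
    (S * (B' - B)).trace ≤ Real.log B'.det - Real.log B.det := by
  classical
  set μ : Fin n → ℝ := fun i => max (lam i) 1 with hμdef
  have hμpos : ∀ i, 0 < μ i := fun i => lt_of_lt_of_le one_pos (le_max_right _ _)
  set V : Matrix (Fin n) (Fin n) ℝ := Matrix.of v with hVdef
  have hsum : ∀ f : Fin n → ℝ,
      (∑ i, f i • vecMulVec (v i) (v i)) = Vᵀ * diagonal f * V := by
    intro f
    ext j k
    simp [Matrix.mul_apply, vecMulVec, Matrix.diagonal, Matrix.sum_apply, smul_eq_mul, hVdef]
    exact Finset.sum_congr rfl fun i _ => by ring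
  have hVVt : V * Vᵀ = 1 := by
    ext i j
    simpa [Matrix.mul_apply, Matrix.one_apply, dotProduct, hVdef] using horth i j
  have hVtV : Vᵀ * V = 1 := mul_eq_one_comm.mp hVVt
  have hDmul : ∀ f g : Fin n → ℝ,
      (Vᵀ * diagonal f * V) * (Vᵀ * diagonal g * V) = Vᵀ * diagonal (fun i => f i * g i) * V := by
    intro f g
    simp only [Matrix.mul_assoc]
    rw [← Matrix.mul_assoc V Vᵀ, hVVt, Matrix.one_mul,
      ← Matrix.mul_assoc (diagonal f) (diagonal g) V, diagonal_mul_diagonal]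
  have hdsq : IsUnit sqB.det := isUnit_iff_ne_zero.mpr hsqB.det_pos.ne'
  have h1 : sqB⁻¹ * sqB = 1 := nonsing_inv_mul _ hdsq
  have h2 : sqB * sqB⁻¹ = 1 := mul_nonsing_inv _ hdsq
  have hSdet : IsUnit S.det := isUnit_iff_ne_zero.mpr hS.det_pos.ne'
  have hconj : ∀ X Y : Matrix (Fin n) (Fin n) ℝ,
      (sqB⁻¹ * X * sqB⁻¹) * (sqB * Y * sqB) = sqB⁻¹ * (X * Y) * sqB := by
    intro X Y
    simp only [Matrix.mul_assoc]
    rw [← Matrix.mul_assoc sqB⁻¹ sqB (Y * sqB), h1, Matrix.one_mul]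
  have hSinv : S⁻¹ = sqB * (Vᵀ * diagonal lam * V) * sqB := by
    rw [hsum] at hdecomp
    calc S⁻¹ = (sqB * sqB⁻¹) * S⁻¹ * (sqB⁻¹ * sqB) := by
          rw [h2, h1, Matrix.one_mul, Matrix.mul_one]
      _ = sqB * (sqB⁻¹ * S⁻¹ * sqB⁻¹) * sqB := by
          simp only [Matrix.mul_assoc]
      _ = _ := by rw [hdecomp]
  have hlamne : ∀ i, lam i ≠ 0 := fun i => (hlam i).ne'
  have hright : (sqB⁻¹ * (Vᵀ * diagonal (fun i => (lam i)⁻¹) * V) * sqB⁻¹) * S⁻¹ = 1 := by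
    rw [hSinv, hconj, hDmul]
    have : (fun i => (lam i)⁻¹ * lam i) = fun _ => (1:ℝ) := by
      funext i; exact inv_mul_cancel₀ (hlamne i)
    rw [this, diagonal_one, Matrix.mul_one, hVtV, Matrix.mul_one, h1]
  have hSeq : S = sqB⁻¹ * (Vᵀ * diagonal (fun i => (lam i)⁻¹) * V) * sqB⁻¹ := by
    have h := Matrix.inv_eq_left_inv hright
    rwa [Matrix.nonsing_inv_nonsing_inv S hSdet] at h
  have hBdiff : B' - B = sqB * (Vᵀ * diagonal (fun i => μ i - 1) * V) * sqB := by
    have hone : Vᵀ * diagonal (fun i => μ i - 1) * V = Vᵀ * diagonal μ * V - 1 := by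
      rw [show diagonal (fun i => μ i - 1) = diagonal μ - 1 by rw [← diagonal_one, diagonal_sub],
        Matrix.mul_sub, Matrix.sub_mul, Matrix.mul_one, hVtV]
    rw [hB', hsum, ← hμdef, hone, Matrix.mul_sub, Matrix.sub_mul, Matrix.mul_one, hsq]
  have htrace : (S * (B' - B)).trace = ∑ i, (lam i)⁻¹ * (μ i - 1) := by
    rw [hSeq, hBdiff, hconj, hDmul, Matrix.trace_mul_comm, ← Matrix.mul_assoc,
      h2, Matrix.one_mul, Matrix.trace_mul_cycle, hVVt, Matrix.one_mul, Matrix.trace_diagonal]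
  have hVdet : V.det * V.det = 1 := by
    have : Vᵀ.det * V.det = 1 := by rw [← det_mul, hVtV, det_one]
    rwa [det_transpose] at this
  have hdetB' : B'.det = B.det * ∏ i, μ i := by
    have hBdet : B.det = sqB.det * sqB.det := by rw [← hsq, det_mul]
    rw [hB', hsum, ← hμdef, det_mul, det_mul, det_mul, det_mul, det_transpose,
      det_diagonal, hBdet]
    linear_combination (sqB.det * sqB.det * ∏ i, μ i) * hVdet
  have hrhs : Real.log B'.det - Real.log B.det = ∑ i, Real.log (μ i) := by
    rw [hdetB', Real.log_mul hB.det_pos.ne' (by positivity), ← Real.log_prod]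
    · ring
    · exact fun i _ => (hμpos i).ne'
  rw [htrace, hrhs]
  apply Finset.sum_le_sum
  intro i _
  rcases le_or_gt 1 (lam i) with h | h
  · have hμi : μ i = lam i := max_eq_left h
    rw [hμi]
    have hlog := Real.log_le_sub_one_of_pos (inv_pos.mpr (hlam i))
    rw [Real.log_inv] at hlog
    have hin : (lam i)⁻¹ * (lam i - 1) = 1 - (lam i)⁻¹ := by
      field_simp
    rw [hin]; linarith
  · have hμi : μ i = 1 := max_eq_right h.le
    simp [hμi]
end

section
/- Let B and Σ be n×n real symmetric positive definite matrices, let B^{1/2} denote the positive definite square root of B, and suppose B^{-1/2} Σ⁻¹ B^{-1/2} = Σ_{i=1}^{n} λᵢ vᵢvᵢᵀ, where λ₁,…,λₙ > 0 and v₁,…,vₙ is an orthonormal basis of ℝⁿ. Define B' = B^{1/2} (Σ_{i=1}^{n} max{λᵢ, 1} vᵢvᵢᵀ) B^{1/2}. Then tr(Σ(B' − B)Σ(B' − B)) ≤ n. -/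
open Matrix

theorem stmt_8 {n : ℕ}
    (B S sqB : Matrix (Fin n) (Fin n) ℝ)
    (hB : B.PosDef) (hS : S.PosDef)
    (hsqB : sqB.PosDef) (hsq : sqB * sqB = B)
    (lam : Fin n → ℝ) (hlam : ∀ i, 0 < lam i)
    (v : Fin n → (Fin n → ℝ))
    (horth : ∀ i j, v i ⬝ᵥ v j = if i = j then (1 : ℝ) else 0)
    (hdecomp : sqB⁻¹ * S⁻¹ * sqB⁻¹ = ∑ i, lam i • vecMulVec (v i) (v i))
    (B' : Matrix (Fin n) (Fin n) ℝ)
    (hB' : B' = sqB * (∑ i, max (lam i) 1 • vecMulVec (v i) (v i)) * sqB) :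
    (S * (B' - B) * (S * (B' - B))).trace ≤ (n : ℝ) := by
  classical
  have hsqBdet : IsUnit sqB.det := isUnit_iff_ne_zero.mpr hsqB.det_pos.ne'
  have hSdet : IsUnit S.det := isUnit_iff_ne_zero.mpr hS.det_pos.ne'
  set V : Matrix (Fin n) (Fin n) ℝ := Matrix.of v with hVdef
  have hVVt : V * Vᵀ = 1 := by
    ext i j
    simpa [Matrix.mul_apply, Matrix.one_apply, dotProduct, V] using horth i j
  have hVtV : Vᵀ * V = 1 := mul_eq_one_comm.mp hVVt
  have hsum : ∀ f : Fin n → ℝ,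
      (∑ i, f i • vecMulVec (v i) (v i)) = Vᵀ * (diagonal f * V) := by
    intro f
    ext i j
    simp [Matrix.mul_apply, Matrix.sum_apply, Matrix.vecMulVec_apply,
      Matrix.diagonal_apply, Finset.mul_sum, V]
    exact Finset.sum_congr rfl fun k _ => by ring
  have c1 : ∀ X : Matrix (Fin n) (Fin n) ℝ, sqB * (sqB⁻¹ * X) = X := fun X => by
    rw [← Matrix.mul_assoc, Matrix.mul_nonsing_inv _ hsqBdet, Matrix.one_mul]
  have c2 : ∀ X : Matrix (Fin n) (Fin n) ℝ, sqB⁻¹ * (sqB * X) = X := fun X => by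
    rw [← Matrix.mul_assoc, Matrix.nonsing_inv_mul _ hsqBdet, Matrix.one_mul]
  have c3 : ∀ X : Matrix (Fin n) (Fin n) ℝ, Vᵀ * (V * X) = X := fun X => by
    rw [← Matrix.mul_assoc, hVtV, Matrix.one_mul]
  have c4 : ∀ X : Matrix (Fin n) (Fin n) ℝ, V * (Vᵀ * X) = X := fun X => by
    rw [← Matrix.mul_assoc, hVVt, Matrix.one_mul]
  have hdiaginv : diagonal (fun i => (lam i)⁻¹) * diagonal lam = 1 := by
    rw [Matrix.diagonal_mul_diagonal]
    have : (fun i => (lam i)⁻¹ * lam i) = fun _ => (1 : ℝ) := by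
      funext i; exact inv_mul_cancel₀ (hlam i).ne'
    rw [this]
    exact Matrix.diagonal_one
  have cD : ∀ X : Matrix (Fin n) (Fin n) ℝ,
      diagonal (fun i => (lam i)⁻¹) * (diagonal lam * X) = X := fun X => by
    rw [← Matrix.mul_assoc, hdiaginv, Matrix.one_mul]
  -- S⁻¹
  have hSinv : S⁻¹ = sqB * (Vᵀ * (diagonal lam * (V * sqB))) := by
    have h := congrArg (fun M => sqB * M * sqB) hdecomp
    simp only [Matrix.mul_assoc] at h
    rw [Matrix.nonsing_inv_mul _ hsqBdet, Matrix.mul_one, c1] at h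
    rw [h, hsum]
    simp only [Matrix.mul_assoc]
  -- S
  have key : (sqB⁻¹ * (Vᵀ * (diagonal (fun i => (lam i)⁻¹) * (V * sqB⁻¹)))) * S⁻¹ = 1 := by
    rw [hSinv]
    simp only [Matrix.mul_assoc]
    rw [c2, c4, cD, c3, Matrix.nonsing_inv_mul _ hsqBdet]
  have hSeq : S = sqB⁻¹ * (Vᵀ * (diagonal (fun i => (lam i)⁻¹) * (V * sqB⁻¹))) := by
    have h2 := Matrix.inv_eq_left_inv key
    rwa [Matrix.nonsing_inv_nonsing_inv S hSdet] at h2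
  -- B' - B
  have hdiff : B' - B = sqB * (Vᵀ * (diagonal (fun i => max (lam i) 1 - 1) * (V * sqB))) := by
    have h1 : diagonal (fun i => max (lam i) 1 - 1)
        = diagonal (fun i => max (lam i) 1) - 1 := by
      rw [← Matrix.diagonal_one, ← Matrix.diagonal_sub]
    rw [hB', hsum, h1, Matrix.sub_mul, Matrix.one_mul, Matrix.mul_sub, Matrix.mul_sub, c3,
      hsq]
    simp only [Matrix.mul_assoc]
  set c : Fin n → ℝ := fun i => (lam i)⁻¹ * (max (lam i) 1 - 1) with hc
  have hX : S * (B' - B) = sqB⁻¹ * (Vᵀ * (diagonal c * (V * sqB))) := by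
    rw [hSeq, hdiff]
    simp only [Matrix.mul_assoc]
    rw [c2, c4, ← Matrix.mul_assoc (diagonal _) (diagonal _), Matrix.diagonal_mul_diagonal]
  have hXX : S * (B' - B) * (S * (B' - B))
      = sqB⁻¹ * (Vᵀ * (diagonal c * (diagonal c * (V * sqB)))) := by
    rw [hX]
    simp only [Matrix.mul_assoc]
    rw [c1, c4]
  rw [hXX]
  rw [Matrix.trace_mul_comm]
  simp only [Matrix.mul_assoc]
  rw [Matrix.mul_nonsing_inv _ hsqBdet, Matrix.mul_one, Matrix.trace_mul_comm]
  simp only [Matrix.mul_assoc]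
  rw [hVVt, Matrix.mul_one, Matrix.diagonal_mul_diagonal, Matrix.trace_diagonal]
  have hterm : ∀ i, c i * c i ≤ 1 := by
    intro i
    have hc0 : 0 ≤ c i := by
      apply mul_nonneg (inv_nonneg.2 (hlam i).le)
      simp [le_max_right]
    have hc1 : c i ≤ 1 := by
      show (lam i)⁻¹ * (max (lam i) 1 - 1) ≤ 1
      rw [inv_mul_eq_div, div_le_one (hlam i)]
      rcases le_total (lam i) 1 with h | h
      · rw [max_eq_right h]; linarith [hlam i]
      · rw [max_eq_left h]; linarith
    calc c i * c i ≤ 1 * 1 := mul_le_mul hc1 hc1 hc0 zero_le_one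
    _ = 1 := by ring
  calc (∑ i, c i * c i) ≤ ∑ _i : Fin n, (1 : ℝ) :=
        Finset.sum_le_sum fun i _ => hterm i
    _ = n := by simp
end
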